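/- Let X be a complex Banach space and A a positive operator on X. Define Λ₁ on X × X × X with domain D(A) × D(A) × D(A) by Λ₁(u,v,w) = (Au, Av, u + Aw); Λ₁ is then a positive operator on X × X × X. For every α ∈ (0,1), the Balakrishnan integral Λ₁^{-α} = (sin(πα)/π) ∫₀^∞ s^{-α}(s+Λ₁)^{-1} ds satisfies Λ₁^{-α}(x,y,z) = (A^{-α}x, A^{-α}y, −α·A^{-1}(A^{-α}x) + A^{-α}z) for all (x,y,z) ∈ X × X × X, where A^{-α} = (sin(πα)/π) ∫₀^∞ s^{-α}(s+A)^{-1} ds and A^{-1} = (0+A)^{-1}. -/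

import Mathlib

open MeasureTheory Real Set

noncomputable section

/-- `R` is a two-sided bounded inverse of `lam + A : D(A) → X`;
in particular `lam + A` is bijective from `D(A)` onto `X` with bounded inverse `R`. -/
def ResolventAt {X : Type*} [NormedAddCommGroup X] [NormedSpace ℂ X]
    (A : X →ₗ.[ℂ] X) (lam : ℂ) (R : X →L[ℂ] X) : Prop :=
  (∀ x : A.domain, R (lam • (x : X) + A x) = x) ∧
  (∀ y : X, ∃ h : R y ∈ A.domain, lam • R y + A ⟨R y, h⟩ = y)

/-- `A` is a positive operator with constant `M ≥ 1` and resolvent family `R`. -/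
structure IsPositive {X : Type*} [NormedAddCommGroup X] [NormedSpace ℂ X]
    (A : X →ₗ.[ℂ] X) (M : ℝ) (R : ℝ → X →L[ℂ] X) : Prop where
  dense_domain : Dense (A.domain : Set X)
  closed_graph : IsClosed (A.graph : Set (X × X))
  one_le : 1 ≤ M
  resolvent : ∀ s : ℝ, 0 ≤ s → ResolventAt A (s : ℂ) (R s)
  bound : ∀ s : ℝ, 0 ≤ s → (1 + s) * ‖R s‖ ≤ M

/-- The Balakrishnan fractional power `A ^ (-α)`, expressed through the
resolvent family `R` of `A`:  `A⁻ᵅ = (sin (π α) / π) ∫₀^∞ s⁻ᵅ (s+A)⁻¹ ds`. -/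
def negPow {X : Type*} [NormedAddCommGroup X] [NormedSpace ℂ X]
    (R : ℝ → X →L[ℂ] X) (α : ℝ) : X →L[ℂ] X :=
  (Real.sin (π * α) / π) • ∫ s in Ioi (0 : ℝ), s ^ (-α) • R s

/-- The bounded operator on `X × X × X` given (for the resolvent family `R` of `A`) by
`(x, y, z) ↦ ((s+A)⁻¹ x, (s+A)⁻¹ y, -(s+A)⁻² x + (s+A)⁻¹ z)`,
i.e. the claimed inverse of `s + Λ₁`. -/
def invL {X : Type*} [NormedAddCommGroup X] [NormedSpace ℂ X]
    (R : ℝ → X →L[ℂ] X) (s : ℝ) : (X × X × X) →L[ℂ] (X × X × X) :=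
  ((R s).comp (ContinuousLinearMap.fst ℂ X (X × X))).prod
    (((R s).comp ((ContinuousLinearMap.fst ℂ X X).comp
        (ContinuousLinearMap.snd ℂ X (X × X)))).prod
      (-((R s).comp ((R s).comp (ContinuousLinearMap.fst ℂ X (X × X)))) +
        (R s).comp ((ContinuousLinearMap.snd ℂ X X).comp
          (ContinuousLinearMap.snd ℂ X (X × X)))))

open Topology Filter

section AuxLemmas

variable {X : Type*} [NormedAddCommGroup X] [NormedSpace ℂ X]
variable {M : ℝ} {A : X →ₗ.[ℂ] X} {R : ℝ → X →L[ℂ] X}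

lemma res_id (hA : IsPositive A M R) {s t : ℝ} (hs : 0 ≤ s) (ht : 0 ≤ t) (y : X) :
    R t y = R s y + (s - t) • R s (R t y) := by
  obtain ⟨h, key⟩ := (hA.resolvent t ht).2 y
  have h1 : R s ((s : ℂ) • (R t y) + A ⟨R t y, h⟩) = R t y := (hA.resolvent s hs).1 ⟨R t y, h⟩
  have hAx : A ⟨R t y, h⟩ = y - (t : ℂ) • R t y := eq_sub_of_add_eq' key
  rw [hAx] at h1
  have harg : (s : ℂ) • R t y + (y - (t : ℂ) • R t y) = ((s - t : ℝ) : ℂ) • R t y + y := by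
    push_cast; rw [sub_smul]; abel
  rw [harg, map_add, ContinuousLinearMap.map_smul, Complex.coe_smul] at h1
  exact h1.symm.trans (add_comm _ _)

lemma res_id_op (hA : IsPositive A M R) {s t : ℝ} (hs : 0 ≤ s) (ht : 0 ≤ t) :
    R t = R s + (s - t) • ((R s).comp (R t)) := by
  ext y
  simpa using res_id hA hs ht y

lemma norm_R_le (hA : IsPositive A M R) {s : ℝ} (hs : 0 ≤ s) : ‖R s‖ ≤ M / (1 + s) := by
  have h0 : (0:ℝ) < 1 + s := by linarith
  rw [le_div_iff₀ h0]
  have := hA.bound s hs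
  linarith

lemma norm_R_le' (hA : IsPositive A M R) {s : ℝ} (hs : 0 ≤ s) : ‖R s‖ ≤ M := by
  have h0 : (0:ℝ) < 1 + s := by linarith
  have hM : 0 ≤ M := le_trans zero_le_one hA.one_le
  exact le_trans (norm_R_le hA hs) (div_le_self hM (by linarith))

set_option maxHeartbeats 1000000 in
lemma R_lip (hA : IsPositive A M R) {s t : ℝ} (hs : 0 ≤ s) (ht : 0 ≤ t) :
    ‖R s - R t‖ ≤ M * M * |s - t| := by
  have h3 : R t - R s = (s - t) • ((R s).comp (R t)) :=
    sub_eq_iff_eq_add'.mpr (res_id_op hA hs ht)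
  have hcomp : ‖(R s).comp (R t)‖ ≤ M * M := by
    calc ‖(R s).comp (R t)‖ ≤ ‖R s‖ * ‖R t‖ := ContinuousLinearMap.opNorm_comp_le _ _
    _ ≤ M * M := mul_le_mul (norm_R_le' hA hs) (norm_R_le' hA ht) (norm_nonneg _)
          (le_trans zero_le_one hA.one_le)
  calc ‖R s - R t‖ = ‖R t - R s‖ := norm_sub_rev _ _
  _ = ‖(s - t) • ((R s).comp (R t))‖ := by rw [h3]
  _ ≤ ‖s - t‖ * ‖(R s).comp (R t)‖ := ContinuousLinearMap.opNorm_smul_le _ _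
  _ ≤ |s - t| * (M * M) := by
      rw [Real.norm_eq_abs]
      exact mul_le_mul_of_nonneg_left hcomp (abs_nonneg _)
  _ = M * M * |s - t| := mul_comm _ _

lemma contR (hA : IsPositive A M R) : ContinuousOn R (Ici (0:ℝ)) := by
  have hM : 0 ≤ M * M := mul_nonneg (le_trans zero_le_one hA.one_le) (le_trans zero_le_one hA.one_le)
  have : LipschitzOnWith (M*M).toNNReal R (Ici 0) := by
    rw [lipschitzOnWith_iff_dist_le_mul]
    intro s hs t ht
    rw [dist_eq_norm, Real.coe_toNNReal _ hM, Real.dist_eq]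
    exact R_lip hA hs ht
  exact this.continuousOn

lemma invL_apply (R : ℝ → X →L[ℂ] X) (s : ℝ) (p : X × X × X) :
    invL R s p = (R s p.1, R s p.2.1, -(R s (R s p.1)) + R s p.2.2) := by
  rfl

lemma prod_eq_comp {Y Z W : Type*} [NormedAddCommGroup Y] [NormedSpace ℂ Y]
    [NormedAddCommGroup Z] [NormedSpace ℂ Z] [NormedAddCommGroup W] [NormedSpace ℂ W]
    (f : Y →L[ℂ] Z) (g : Y →L[ℂ] W) :
    f.prod g = (ContinuousLinearMap.inl ℂ Z W).comp f + (ContinuousLinearMap.inr ℂ Z W).comp g := by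
  ext y <;> simp

lemma cont_invL (hR : ContinuousOn R (Ici (0:ℝ))) :
    ContinuousOn (fun s => invL R s) (Ici (0:ℝ)) := by
  unfold invL
  simp only [prod_eq_comp]
  apply ContinuousOn.add
  · exact continuousOn_const.clm_comp (hR.clm_comp continuousOn_const)
  apply ContinuousOn.clm_comp continuousOn_const
  apply ContinuousOn.add
  · exact continuousOn_const.clm_comp (hR.clm_comp continuousOn_const)
  apply ContinuousOn.clm_comp continuousOn_const
  apply ContinuousOn.add
  · exact (hR.clm_comp (hR.clm_comp continuousOn_const)).neg
  · exact hR.clm_comp continuousOn_const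

lemma norm_invL_le {s : ℝ} (hs : 0 ≤ s) (hM : 0 ≤ M)
    (h1 : ‖R s‖ ≤ M / (1 + s)) (h2 : ‖R s‖ ≤ M) :
    ‖invL R s‖ ≤ (M + M * M) / (1 + s) := by
  have h0 : (0:ℝ) < 1 + s := by linarith
  apply ContinuousLinearMap.opNorm_le_bound _ (by positivity)
  intro p
  rw [invL_apply]
  have hp1 : ‖p.1‖ ≤ ‖p‖ := norm_fst_le p
  have hp21 : ‖p.2.1‖ ≤ ‖p‖ := le_trans (norm_fst_le p.2) (norm_snd_le p)
  have hp22 : ‖p.2.2‖ ≤ ‖p‖ := le_trans (norm_snd_le p.2) (norm_snd_le p)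
  have hnp : 0 ≤ ‖p‖ := norm_nonneg _
  have key : ∀ v : X, ‖v‖ ≤ ‖p‖ → ‖R s v‖ ≤ M / (1 + s) * ‖p‖ := fun v hv =>
    le_trans (ContinuousLinearMap.le_opNorm _ _)
      (mul_le_mul h1 hv (norm_nonneg _) (by positivity))
  have hmono : M / (1 + s) ≤ (M + M * M) / (1 + s) := by
    gcongr
    nlinarith
  have hb1 : ‖R s p.1‖ ≤ (M + M * M) / (1 + s) * ‖p‖ :=
    le_trans (key _ hp1) (mul_le_mul_of_nonneg_right hmono hnp)
  have hb2 : ‖R s p.2.1‖ ≤ (M + M * M) / (1 + s) * ‖p‖ :=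
    le_trans (key _ hp21) (mul_le_mul_of_nonneg_right hmono hnp)
  have hb3 : ‖-(R s (R s p.1)) + R s p.2.2‖ ≤ (M + M * M) / (1 + s) * ‖p‖ := by
    have e1 : ‖R s (R s p.1)‖ ≤ M / (1 + s) * (M * ‖p‖) := by
      refine le_trans (ContinuousLinearMap.le_opNorm _ _) ?_
      apply mul_le_mul h1 ?_ (norm_nonneg _) (by positivity)
      exact le_trans (ContinuousLinearMap.le_opNorm _ _)
        (mul_le_mul h2 hp1 (norm_nonneg _) hM)
    have e2 : ‖R s p.2.2‖ ≤ M / (1 + s) * ‖p‖ := key _ hp22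
    calc ‖-(R s (R s p.1)) + R s p.2.2‖ ≤ ‖-(R s (R s p.1))‖ + ‖R s p.2.2‖ := norm_add_le _ _
    _ = ‖R s (R s p.1)‖ + ‖R s p.2.2‖ := by rw [norm_neg]
    _ ≤ M / (1 + s) * (M * ‖p‖) + M / (1 + s) * ‖p‖ := add_le_add e1 e2
    _ = (M + M * M) / (1 + s) * ‖p‖ := by field_simp; ring
  calc ‖((R s) p.1, (R s) p.2.1, -((R s) ((R s) p.1)) + (R s) p.2.2)‖
      = max ‖R s p.1‖ (max ‖R s p.2.1‖ ‖-(R s (R s p.1)) + R s p.2.2‖) := rfl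
  _ ≤ (M + M * M) / (1 + s) * ‖p‖ := max_le hb1 (max_le hb2 hb3)

lemma contOn_rpow (α : ℝ) : ContinuousOn (fun s : ℝ => s ^ (-α)) (Ioi 0) :=
  fun x hx => (Real.continuousAt_rpow_const x (-α) (Or.inl (ne_of_gt hx))).continuousWithinAt

lemma contOn_weight {α : ℝ} : ContinuousOn (fun s : ℝ => s ^ (-α) / (1 + s)) (Ioi 0) := by
  apply ContinuousOn.div (contOn_rpow α)
  · fun_prop
  · intro x hx
    have : (0:ℝ) < x := hx
    positivity

lemma integrable_weight {α : ℝ} (hα : α ∈ Ioo (0:ℝ) 1) :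
    IntegrableOn (fun s : ℝ => s ^ (-α) / (1 + s)) (Ioi (0:ℝ)) := by
  have hw : ∀ s : ℝ, 0 < s → 0 ≤ s ^ (-α) / (1 + s) := by
    intro s hs; positivity
  have h1 : IntegrableOn (fun s : ℝ => s ^ (-α) / (1 + s)) (Ioc 0 1) := by
    have hi : IntegrableOn (fun s : ℝ => s ^ (-α)) (Ioc (0:ℝ) 1) := by
      have := intervalIntegral.intervalIntegrable_rpow' (a := 0) (b := 1) (r := -α)
        (by linarith [hα.2])
      rwa [intervalIntegrable_iff_integrableOn_Ioc_of_le (by norm_num)] at this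
    apply Integrable.mono' hi
    · exact ((contOn_weight.mono Ioc_subset_Ioi_self).aestronglyMeasurable measurableSet_Ioc)
    · refine (ae_restrict_iff' measurableSet_Ioc).2 (ae_of_all _ fun s hs => ?_)
      rw [Real.norm_eq_abs, abs_of_nonneg (hw s hs.1)]
      have h1s : (1:ℝ) ≤ 1 + s := by linarith [hs.1]
      calc s ^ (-α) / (1 + s) ≤ s ^ (-α) / 1 := by
            apply div_le_div_of_nonneg_left (Real.rpow_nonneg hs.1.le _) (by norm_num) h1s
      _ = s ^ (-α) := div_one _
  have h2 : IntegrableOn (fun s : ℝ => s ^ (-α) / (1 + s)) (Ioi 1) := by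
    have hi : IntegrableOn (fun s : ℝ => s ^ (-α - 1)) (Ioi (1:ℝ)) :=
      integrableOn_Ioi_rpow_of_lt (by linarith [hα.1]) one_pos
    apply Integrable.mono' hi
    · exact ((contOn_weight.mono (t := Ioi (1:ℝ)) fun x (hx : 1 < x) => (lt_trans one_pos hx : x ∈ Ioi (0:ℝ))).aestronglyMeasurable
        measurableSet_Ioi)
    · refine (ae_restrict_iff' measurableSet_Ioi).2 (ae_of_all _ fun s hs => ?_)
      have hs1 : (1:ℝ) < s := hs
      have hs0 : (0:ℝ) < s := lt_trans one_pos hs1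
      rw [Real.norm_eq_abs, abs_of_nonneg (hw s hs0)]
      calc s ^ (-α) / (1 + s) ≤ s ^ (-α) / s := by
            apply div_le_div_of_nonneg_left (by positivity) hs0 (by linarith)
      _ = s ^ (-α - 1) := by
            rw [Real.rpow_sub hs0, Real.rpow_one]
  have := h1.union h2
  rwa [Ioc_union_Ioi_eq_Ioi (by norm_num : (0:ℝ) ≤ 1)] at this

lemma integrable_of_bound {E : Type*} [NormedAddCommGroup E] {F : ℝ → E}
    (hF : ContinuousOn F (Ioi 0)) {α : ℝ} (hα : α ∈ Ioo (0:ℝ) 1) {C : ℝ}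
    (hbound : ∀ s ∈ Ioi (0:ℝ), ‖F s‖ ≤ C * (s ^ (-α) / (1 + s))) :
    IntegrableOn F (Ioi 0) := by
  apply Integrable.mono' ((integrable_weight hα).const_mul C)
    (hF.aestronglyMeasurable measurableSet_Ioi)
  exact (ae_restrict_iff' measurableSet_Ioi).2 (ae_of_all _ hbound)

lemma hasDerivAt_R (hA : IsPositive A M R) {s : ℝ} (hs : 0 < s) (x : X) :
    HasDerivAt (fun t => R t x) (-(R s (R s x))) s := by
  rw [hasDerivAt_iff_tendsto_slope]
  have hev : ∀ᶠ t in 𝓝[≠] s, -(R t (R s x)) = slope (fun t => R t x) s t := by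
    filter_upwards [self_mem_nhdsWithin,
      mem_nhdsWithin_of_mem_nhds (Ioi_mem_nhds hs)] with t hts ht
    have hid := res_id hA (le_of_lt ht) hs.le x
    have h' : (t - s) • R t (R s x) = R s x - R t x := eq_sub_of_add_eq' hid.symm
    have hsub : (fun u => R u x) t - (fun u => R u x) s = (t - s) • (-(R t (R s x))) := by
      simp only [smul_neg]
      rw [h']; abel
    rw [slope_def_module, hsub, smul_smul,
      inv_mul_cancel₀ (sub_ne_zero.mpr (by simpa using hts)), one_smul]
  apply Filter.Tendsto.congr' hev
  have hc : ContinuousAt (fun t => R t (R s x)) s :=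
    ((contR hA).clm_apply continuousOn_const).continuousAt (Ici_mem_nhds hs)
  exact (hc.neg.tendsto).mono_left nhdsWithin_le_nhds

lemma hasDerivAt_G (hA : IsPositive A M R) {α : ℝ} (x : X) {s : ℝ} (hs : 0 < s) :
    HasDerivAt (fun t : ℝ => t ^ (-α) • (R t x - R 0 x))
      ((α * s ^ (-α)) • (R 0 (R s x)) - s ^ (-α) • (R s (R s x))) s := by
  have h1 : HasDerivAt (fun t : ℝ => t ^ (-α)) (-α * s ^ (-α - 1)) s := by
    simpa using Real.hasDerivAt_rpow_const (x := s) (p := -α) (Or.inl hs.ne')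
  have h2 : HasDerivAt (fun t => R t x - R 0 x) (-(R s (R s x))) s :=
    (hasDerivAt_R hA hs x).sub_const _
  have h3 := h1.smul h2
  convert h3 using 1
  · rfl
  have hd : R s x - R 0 x = -(s • R 0 (R s x)) := by
    have hid := res_id hA (le_refl (0:ℝ)) hs.le x
    have h' : R s x - R 0 x = (0 - s) • R 0 (R s x) := sub_eq_iff_eq_add'.mpr hid
    rw [h', zero_sub, neg_smul]
  have hpow : -α * s ^ (-α - 1) * s = -(α * s ^ (-α)) := by
    rw [show (-α : ℝ) - 1 = -α + (-1) from by ring, Real.rpow_add hs, Real.rpow_neg_one]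
    field_simp
  rw [hd, smul_neg, smul_neg, smul_smul, hpow, neg_smul, neg_neg]
  abel

end AuxLemmas

section KeyLemmas

variable {X : Type*} [NormedAddCommGroup X] [NormedSpace ℂ X] [CompleteSpace X]
variable {M : ℝ} {A : X →ₗ.[ℂ] X} {R : ℝ → X →L[ℂ] X}

lemma int_Rx (hA : IsPositive A M R) {α : ℝ} (hα : α ∈ Ioo (0:ℝ) 1) (x : X) :
    IntegrableOn (fun s : ℝ => s ^ (-α) • (R s x)) (Ioi 0) := by
  apply integrable_of_bound (C := M * ‖x‖) ?_ hα ?_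
  · exact (contOn_rpow α).smul
      (((contR hA).mono Ioi_subset_Ici_self).clm_apply continuousOn_const)
  · intro s hs
    have hs0 : (0:ℝ) < s := hs
    have h0 : (0:ℝ) < 1 + s := by linarith
    calc ‖s ^ (-α) • R s x‖ ≤ ‖s ^ (-α)‖ * ‖R s x‖ := norm_smul_le _ _
    _ = s ^ (-α) * ‖R s x‖ := by
        rw [Real.norm_eq_abs, abs_of_nonneg (Real.rpow_nonneg hs0.le _)]
    _ ≤ s ^ (-α) * (M / (1 + s) * ‖x‖) := by
        apply mul_le_mul_of_nonneg_left ?_ (Real.rpow_nonneg hs0.le _)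
        exact le_trans (ContinuousLinearMap.le_opNorm _ _)
          (mul_le_mul_of_nonneg_right (norm_R_le hA hs0.le) (norm_nonneg _))
    _ = M * ‖x‖ * (s ^ (-α) / (1 + s)) := by ring

lemma int_RRx (hA : IsPositive A M R) {α : ℝ} (hα : α ∈ Ioo (0:ℝ) 1) (x : X) :
    IntegrableOn (fun s : ℝ => s ^ (-α) • (R s (R s x))) (Ioi 0) := by
  have hM : 0 ≤ M := le_trans zero_le_one hA.one_le
  apply integrable_of_bound (C := M * M * ‖x‖) ?_ hα ?_
  · apply (contOn_rpow α).smul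
    exact ((contR hA).mono Ioi_subset_Ici_self).clm_apply
      (((contR hA).mono Ioi_subset_Ici_self).clm_apply continuousOn_const)
  · intro s hs
    have hs0 : (0:ℝ) < s := hs
    have h0 : (0:ℝ) < 1 + s := by linarith
    calc ‖s ^ (-α) • R s (R s x)‖ ≤ ‖s ^ (-α)‖ * ‖R s (R s x)‖ := norm_smul_le _ _
    _ = s ^ (-α) * ‖R s (R s x)‖ := by
        rw [Real.norm_eq_abs, abs_of_nonneg (Real.rpow_nonneg hs0.le _)]
    _ ≤ s ^ (-α) * (M / (1 + s) * (M * ‖x‖)) := by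
        apply mul_le_mul_of_nonneg_left ?_ (Real.rpow_nonneg hs0.le _)
        refine le_trans (ContinuousLinearMap.le_opNorm _ _) ?_
        apply mul_le_mul (norm_R_le hA hs0.le) ?_ (norm_nonneg _) (by positivity)
        exact le_trans (ContinuousLinearMap.le_opNorm _ _)
          (mul_le_mul_of_nonneg_right (norm_R_le' hA hs0.le) (norm_nonneg _))
    _ = M * M * ‖x‖ * (s ^ (-α) / (1 + s)) := by ring

lemma int_R0Rx (hA : IsPositive A M R) {α : ℝ} (hα : α ∈ Ioo (0:ℝ) 1) (x : X) :
    IntegrableOn (fun s : ℝ => (α * s ^ (-α)) • (R 0 (R s x))) (Ioi 0) := by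
  have heq : (fun s : ℝ => (α * s ^ (-α)) • (R 0 (R s x)))
      = fun s : ℝ => α • R 0 (s ^ (-α) • (R s x)) := by
    funext s
    rw [ContinuousLinearMap.map_smul_of_tower, smul_smul]
  rw [heq]
  exact ((R 0).integrable_comp (int_Rx hA hα x)).smul α

lemma key_identity (hA : IsPositive A M R) {α : ℝ} (hα : α ∈ Ioo (0:ℝ) 1) (x : X) :
    ∫ s in Ioi (0:ℝ), s ^ (-α) • (R s (R s x))
      = α • R 0 (∫ s in Ioi (0:ℝ), s ^ (-α) • (R s x)) := by
  have hM : 0 ≤ M := le_trans zero_le_one hA.one_le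
  -- continuity at 0 of G
  have hbound0 : ∀ᶠ t in 𝓝[Ici (0:ℝ)] 0,
      ‖t ^ (-α) • (R t x - R 0 x)‖ ≤ M * M * ‖x‖ * t ^ (1 - α) := by
    filter_upwards [self_mem_nhdsWithin] with t (ht : t ∈ Ici (0:ℝ))
    rcases eq_or_lt_of_le (Set.mem_Ici.mp ht) with h | h
    · rw [← h]
      simp [Real.zero_rpow (by linarith [hα.2] : (1:ℝ) - α ≠ 0),
        Real.zero_rpow (by linarith [hα.1] : -α ≠ 0)]
    · have e1 : ‖R t x - R 0 x‖ ≤ M * M * t * ‖x‖ := by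
        have := R_lip hA (le_of_lt h) (le_refl (0:ℝ))
        rw [sub_zero, abs_of_nonneg h.le] at this
        calc ‖R t x - R 0 x‖ = ‖(R t - R 0) x‖ := by
              rw [ContinuousLinearMap.sub_apply]
        _ ≤ ‖R t - R 0‖ * ‖x‖ := ContinuousLinearMap.le_opNorm _ _
        _ ≤ M * M * t * ‖x‖ := mul_le_mul_of_nonneg_right this (norm_nonneg _)
      calc ‖t ^ (-α) • (R t x - R 0 x)‖ ≤ ‖t ^ (-α)‖ * ‖R t x - R 0 x‖ := norm_smul_le _ _
      _ = t ^ (-α) * ‖R t x - R 0 x‖ := by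
          rw [Real.norm_eq_abs, abs_of_nonneg (Real.rpow_nonneg h.le _)]
      _ ≤ t ^ (-α) * (M * M * t * ‖x‖) :=
          mul_le_mul_of_nonneg_left e1 (Real.rpow_nonneg h.le _)
      _ = M * M * ‖x‖ * (t ^ (-α) * t) := by ring
      _ = M * M * ‖x‖ * t ^ (1 - α) := by
          rw [show (1:ℝ) - α = -α + 1 from by ring, Real.rpow_add h, Real.rpow_one]
  have htend_bound : Tendsto (fun t : ℝ => M * M * ‖x‖ * t ^ (1 - α)) (𝓝[Ici (0:ℝ)] 0)
      (𝓝 0) := by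
    have hc : ContinuousAt (fun t : ℝ => t ^ (1 - α)) 0 :=
      Real.continuousAt_rpow_const 0 (1 - α) (Or.inr (by linarith [hα.2]))
    have := (hc.tendsto.const_mul (M * M * ‖x‖)).mono_left
      (nhdsWithin_le_nhds : 𝓝[Ici (0:ℝ)] 0 ≤ 𝓝 0)
    simpa [Real.zero_rpow (by linarith [hα.2] : (1:ℝ) - α ≠ 0)] using this
  have hT0 : Tendsto (fun t : ℝ => t ^ (-α) • (R t x - R 0 x)) (𝓝[Ici (0:ℝ)] 0) (𝓝 0) :=
    squeeze_zero_norm' hbound0 htend_bound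
  have hcont0 : ContinuousWithinAt (fun t : ℝ => t ^ (-α) • (R t x - R 0 x)) (Ici 0) 0 := by
    simpa [ContinuousWithinAt, Real.zero_rpow (by linarith [hα.1] : -α ≠ 0)] using hT0
  -- tendsto at top
  have hboundT : ∀ᶠ t in (atTop : Filter ℝ),
      ‖t ^ (-α) • (R t x - R 0 x)‖ ≤ 2 * M * ‖x‖ * t ^ (-α) := by
    filter_upwards [eventually_gt_atTop (0:ℝ)] with t ht
    have e1 : ‖R t x - R 0 x‖ ≤ 2 * M * ‖x‖ := by
      calc ‖R t x - R 0 x‖ ≤ ‖R t x‖ + ‖R 0 x‖ := norm_sub_le _ _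
      _ ≤ M * ‖x‖ + M * ‖x‖ := by
          gcongr
          · exact le_trans (ContinuousLinearMap.le_opNorm _ _)
              (mul_le_mul_of_nonneg_right (norm_R_le' hA ht.le) (norm_nonneg _))
          · exact le_trans (ContinuousLinearMap.le_opNorm _ _)
              (mul_le_mul_of_nonneg_right (norm_R_le' hA (le_refl 0)) (norm_nonneg _))
      _ = 2 * M * ‖x‖ := by ring
    calc ‖t ^ (-α) • (R t x - R 0 x)‖ ≤ ‖t ^ (-α)‖ * ‖R t x - R 0 x‖ := norm_smul_le _ _
    _ = t ^ (-α) * ‖R t x - R 0 x‖ := by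
        rw [Real.norm_eq_abs, abs_of_nonneg (Real.rpow_nonneg ht.le _)]
    _ ≤ t ^ (-α) * (2 * M * ‖x‖) :=
        mul_le_mul_of_nonneg_left e1 (Real.rpow_nonneg ht.le _)
    _ = 2 * M * ‖x‖ * t ^ (-α) := mul_comm _ _
  have htendT : Tendsto (fun t : ℝ => t ^ (-α) • (R t x - R 0 x)) atTop (𝓝 0) := by
    apply squeeze_zero_norm' hboundT
    have := (tendsto_rpow_neg_atTop hα.1).const_mul (2 * M * ‖x‖)
    simpa using this
  -- FTC
  have hftc := integral_Ioi_of_hasDerivAt_of_tendsto (a := (0:ℝ))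
    (f := fun t : ℝ => t ^ (-α) • (R t x - R 0 x))
    (f' := fun s : ℝ => (α * s ^ (-α)) • (R 0 (R s x)) - s ^ (-α) • (R s (R s x)))
    (m := 0) hcont0 (fun s hs => hasDerivAt_G hA x hs)
    ((int_R0Rx hA hα x).sub (int_RRx hA hα x)) htendT
  have hG0 : (fun t : ℝ => t ^ (-α) • (R t x - R 0 x)) 0 = 0 := by
    simp
  rw [sub_self, smul_zero, sub_zero] at hftc
  have hsplit := integral_sub (int_R0Rx hA hα x) (int_RRx hA hα x)
  rw [hsplit] at hftc
  have h5 : ∫ s in Ioi (0:ℝ), s ^ (-α) • (R s (R s x))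
      = ∫ s in Ioi (0:ℝ), (α * s ^ (-α)) • (R 0 (R s x)) := (sub_eq_zero.mp hftc).symm
  rw [h5]
  have heq : (fun s : ℝ => (α * s ^ (-α)) • (R 0 (R s x)))
      = fun s : ℝ => α • R 0 (s ^ (-α) • (R s x)) := by
    funext s
    rw [ContinuousLinearMap.map_smul_of_tower, smul_smul]
  rw [heq, integral_smul, ContinuousLinearMap.integral_comp_comm _ (int_Rx hA hα x)]

end KeyLemmas

set_option maxHeartbeats 1000000 in
/-- the Balakrishnan integral for `Λ₁` exists and, componentwise,
`Λ₁⁻ᵅ (x,y,z) = (A⁻ᵅ x, A⁻ᵅ y, -α A⁻¹ (A⁻ᵅ x) + A⁻ᵅ z)`. -/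
theorem stmt12 {X : Type*} [NormedAddCommGroup X] [NormedSpace ℂ X] [CompleteSpace X]
    (M : ℝ) (A : X →ₗ.[ℂ] X) (R : ℝ → X →L[ℂ] X) (hA : IsPositive A M R)
    (α : ℝ) (hα : α ∈ Ioo (0 : ℝ) 1) :
    IntegrableOn (fun s : ℝ => s ^ (-α) • invL R s) (Ioi 0) ∧
    ∀ p : X × X × X,
      ((Real.sin (π * α) / π) • ∫ s in Ioi (0 : ℝ), s ^ (-α) • invL R s) p
        = (negPow R α p.1, negPow R α p.2.1,
            -(α • (R 0) (negPow R α p.1)) + negPow R α p.2.2) := by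
  have hM : 0 ≤ M := le_trans zero_le_one hA.one_le
  have intF : IntegrableOn (fun s : ℝ => s ^ (-α) • R s) (Ioi 0) := by
    apply integrable_of_bound (C := M) ?_ hα ?_
    · exact (contOn_rpow α).smul ((contR hA).mono Ioi_subset_Ici_self)
    · intro s hs
      have hs0 : (0:ℝ) < s := hs
      calc ‖s ^ (-α) • R s‖ ≤ ‖s ^ (-α)‖ * ‖R s‖ := ContinuousLinearMap.opNorm_smul_le _ _
      _ = s ^ (-α) * ‖R s‖ := by
          rw [Real.norm_eq_abs, abs_of_nonneg (Real.rpow_nonneg hs0.le _)]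
      _ ≤ s ^ (-α) * (M / (1 + s)) :=
          mul_le_mul_of_nonneg_left (norm_R_le hA hs0.le) (Real.rpow_nonneg hs0.le _)
      _ = M * (s ^ (-α) / (1 + s)) := by ring
  have intInv : IntegrableOn (fun s : ℝ => s ^ (-α) • invL R s) (Ioi 0) := by
    apply integrable_of_bound (C := M + M * M) ?_ hα ?_
    · exact (contOn_rpow α).smul ((cont_invL (contR hA)).mono Ioi_subset_Ici_self)
    · intro s hs
      have hs0 : (0:ℝ) < s := hs
      calc ‖s ^ (-α) • invL R s‖ ≤ ‖s ^ (-α)‖ * ‖invL R s‖ :=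
          ContinuousLinearMap.opNorm_smul_le _ _
      _ = s ^ (-α) * ‖invL R s‖ := by
          rw [Real.norm_eq_abs, abs_of_nonneg (Real.rpow_nonneg hs0.le _)]
      _ ≤ s ^ (-α) * ((M + M * M) / (1 + s)) :=
          mul_le_mul_of_nonneg_left
            (norm_invL_le hs0.le hM (norm_R_le hA hs0.le) (norm_R_le' hA hs0.le))
            (Real.rpow_nonneg hs0.le _)
      _ = (M + M * M) * (s ^ (-α) / (1 + s)) := by ring
  refine ⟨intInv, fun p => ?_⟩
  set c : ℝ := Real.sin (π * α) / π with hc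
  have negPow_apply : ∀ v : X, negPow R α v = c • ∫ s in Ioi (0:ℝ), s ^ (-α) • (R s v) := by
    intro v
    rw [negPow, ContinuousLinearMap.smul_apply, ContinuousLinearMap.integral_apply intF]
    simp only [ContinuousLinearMap.smul_apply]
    rfl
  have hFp : IntegrableOn (fun s : ℝ => s ^ (-α) • (invL R s p)) (Ioi 0) := by
    have := intInv.apply_continuousLinearMap p
    simpa only [ContinuousLinearMap.smul_apply, IntegrableOn] using this
  have happ : ((c : ℝ) • ∫ s in Ioi (0:ℝ), s ^ (-α) • invL R s) p
      = c • ∫ s in Ioi (0:ℝ), s ^ (-α) • (invL R s p) := by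
    rw [ContinuousLinearMap.smul_apply, ContinuousLinearMap.integral_apply intInv]
    simp only [ContinuousLinearMap.smul_apply]
  rw [happ]
  -- components of the integral
  have hg1 : (fun s : ℝ => (ContinuousLinearMap.fst ℂ X (X × X)) (s ^ (-α) • (invL R s p)))
      = fun s : ℝ => s ^ (-α) • (R s p.1) := by
    funext s; simp [invL_apply]
  have hg21 : (fun s : ℝ => ((ContinuousLinearMap.fst ℂ X X).comp
        (ContinuousLinearMap.snd ℂ X (X × X))) (s ^ (-α) • (invL R s p)))
      = fun s : ℝ => s ^ (-α) • (R s p.2.1) := by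
    funext s; simp [invL_apply]
  have hg22 : (fun s : ℝ => ((ContinuousLinearMap.snd ℂ X X).comp
        (ContinuousLinearMap.snd ℂ X (X × X))) (s ^ (-α) • (invL R s p)))
      = fun s : ℝ => s ^ (-α) • (-(R s (R s p.1)) + R s p.2.2) := by
    funext s; simp [invL_apply]
  have comp1 : (∫ s in Ioi (0:ℝ), s ^ (-α) • (invL R s p)).1
      = ∫ s in Ioi (0:ℝ), s ^ (-α) • (R s p.1) := by
    calc (∫ s in Ioi (0:ℝ), s ^ (-α) • (invL R s p)).1
        = (ContinuousLinearMap.fst ℂ X (X × X)) (∫ s in Ioi (0:ℝ), s ^ (-α) • (invL R s p)) :=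
          rfl
    _ = ∫ s in Ioi (0:ℝ), (ContinuousLinearMap.fst ℂ X (X × X)) (s ^ (-α) • (invL R s p)) :=
          ((ContinuousLinearMap.fst ℂ X (X × X)).integral_comp_comm hFp).symm
    _ = ∫ s in Ioi (0:ℝ), s ^ (-α) • (R s p.1) := by rw [hg1]
  have comp21 : (∫ s in Ioi (0:ℝ), s ^ (-α) • (invL R s p)).2.1
      = ∫ s in Ioi (0:ℝ), s ^ (-α) • (R s p.2.1) := by
    calc (∫ s in Ioi (0:ℝ), s ^ (-α) • (invL R s p)).2.1
        = ((ContinuousLinearMap.fst ℂ X X).comp (ContinuousLinearMap.snd ℂ X (X × X)))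
            (∫ s in Ioi (0:ℝ), s ^ (-α) • (invL R s p)) := rfl
    _ = ∫ s in Ioi (0:ℝ), ((ContinuousLinearMap.fst ℂ X X).comp
          (ContinuousLinearMap.snd ℂ X (X × X))) (s ^ (-α) • (invL R s p)) :=
          (ContinuousLinearMap.integral_comp_comm _ hFp).symm
    _ = ∫ s in Ioi (0:ℝ), s ^ (-α) • (R s p.2.1) := by rw [hg21]
  have comp22 : (∫ s in Ioi (0:ℝ), s ^ (-α) • (invL R s p)).2.2
      = ∫ s in Ioi (0:ℝ), s ^ (-α) • (-(R s (R s p.1)) + R s p.2.2) := by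
    calc (∫ s in Ioi (0:ℝ), s ^ (-α) • (invL R s p)).2.2
        = ((ContinuousLinearMap.snd ℂ X X).comp (ContinuousLinearMap.snd ℂ X (X × X)))
            (∫ s in Ioi (0:ℝ), s ^ (-α) • (invL R s p)) := rfl
    _ = ∫ s in Ioi (0:ℝ), ((ContinuousLinearMap.snd ℂ X X).comp
          (ContinuousLinearMap.snd ℂ X (X × X))) (s ^ (-α) • (invL R s p)) :=
          (ContinuousLinearMap.integral_comp_comm _ hFp).symm
    _ = ∫ s in Ioi (0:ℝ), s ^ (-α) • (-(R s (R s p.1)) + R s p.2.2) := by rw [hg22]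
  refine Prod.ext ?_ (Prod.ext ?_ ?_)
  · show c • (∫ s in Ioi (0:ℝ), s ^ (-α) • (invL R s p)).1 = negPow R α p.1
    rw [comp1, negPow_apply]
  · show c • (∫ s in Ioi (0:ℝ), s ^ (-α) • (invL R s p)).2.1 = negPow R α p.2.1
    rw [comp21, negPow_apply]
  · show c • (∫ s in Ioi (0:ℝ), s ^ (-α) • (invL R s p)).2.2
        = -(α • (R 0) (negPow R α p.1)) + negPow R α p.2.2
    rw [comp22]
    have hsplit : (fun s : ℝ => s ^ (-α) • (-(R s (R s p.1)) + R s p.2.2))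
        = fun s : ℝ => -(s ^ (-α) • (R s (R s p.1))) + s ^ (-α) • (R s p.2.2) := by
      funext s
      rw [smul_add, smul_neg]
    have hneg : IntegrableOn (fun s : ℝ => -(s ^ (-α) • (R s (R s p.1)))) (Ioi 0) :=
      (int_RRx hA hα p.1).neg
    rw [hsplit, integral_add hneg (int_Rx hA hα p.2.2), integral_neg,
      key_identity hA hα p.1, negPow_apply, negPow_apply, smul_add]
    congr 1
    rw [smul_neg, ContinuousLinearMap.map_smul_of_tower, smul_comm c α]
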